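/- arXiv:1811.05444 — 2 statements merged into one kernel-verified Lean document; each statement's English description precedes it below -/
import Mathlib

section
/- Suppose k ≥ 2. Let u* be a (k−2)-element set disjoint from ω × 2, let I = (ω × 2) ∪ u*, and let S = { u* ∪ {(j,0),(j,1)} : j < ω } ⊆ [I]^k. Then S is (k+1)-clique-free and Δ(IP) is an instance of Δ_{k+1,k}(S)^{k−1}. Consequently, for every n > k ≥ 2 there exist an index set I, an n-clique-free S ⊆ [I]^k, and i* < ω such that Δ(IP) is an instance of Δ_{n,k}(S)^{i*}. -/
universe x y

/-- Δ' on J is an instance of Δ on I. -/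
def IsInstanceOf {J : Type*} {I : Type*} (Δ' : Set (Finset J)) (Δ : Set (Finset I)) : Prop :=
  ∀ s : Finset J, ∃ f : J → I, ∀ t ⊆ s,
    (t ∈ Δ' ↔ (letI := Classical.decEq I; t.image f) ∈ Δ)

/-- Δ^m : the pattern on [I]^{≤m} consisting of finite s with ⋃ s ∈ Δ. -/
def patternPow {I : Type x} (Δ : Set (Finset I)) (m : ℕ) :
    Set (Finset {u : Finset I // u.card ≤ m}) :=
  letI := Classical.decEq I
  {s | s.sup (fun u => u.1) ∈ Δ}

/-- The pattern Δ_{n,k}(S) on [I]^{k-1}: finite sets s of (k-1)-element subsets of I such that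
there is no (n-1)-element v ⊆ I with all (k-1)-element subsets of v in s and all k-element
subsets of v in S. -/
def deltaNK {I : Type x} (n k : ℕ) (S : Set (Finset I)) :
    Set (Finset {u : Finset I // u.card = k - 1}) :=
  {s | ¬ ∃ v : Finset I, v.card = n - 1 ∧
      (∀ (u : Finset I) (hu : u.card = k - 1), u ⊆ v →
        (⟨u, hu⟩ : {u : Finset I // u.card = k - 1}) ∈ s) ∧
      (∀ w : Finset I, w ⊆ v → w.card = k → w ∈ S)}

/-- S ⊆ [I]^k is n-clique-free: no n-element w ⊆ I has all its k-element subsets in S. -/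
def CliqueFreeSet {I : Type x} (n k : ℕ) (S : Set (Finset I)) : Prop :=
  ¬ ∃ w : Finset I, w.card = n ∧ ∀ v : Finset I, v ⊆ w → v.card = k → v ∈ S

/-- The pattern Δ(IP) on ω × 2: finite sets containing no pair (j,0), (j,1). -/
def deltaIP : Set (Finset (ℕ × Fin 2)) :=
  {s | ∀ j : ℕ, ¬((j, 0) ∈ s ∧ (j, 1) ∈ s)}

/-- The k-uniform hypergraph S = { u* ∪ {(j,0),(j,1)} : j < ω } on I = (ω × 2) ⊕ u*, where
u* is a (k−2)-element set disjoint from ω × 2. -/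
def ipHyper (k : ℕ) : Set (Finset ((ℕ × Fin 2) ⊕ Fin (k - 2))) :=
  {w | ∃ j : ℕ, w = (Finset.univ.image Sum.inr) ∪ {Sum.inl (j, 0), Sum.inl (j, 1)}}

open Finset

section Gen

variable {I : Type} [DecidableEq I]

/-- The set u* ∪ {ι(j,0), ι(j,1)}. -/
def genV (ι : ℕ × Fin 2 → I) (U : Finset I) (j : ℕ) : Finset I :=
  U ∪ {ι (j, 0), ι (j, 1)}

/-- The k-uniform hypergraph of all k-subsets of the genV's. -/
def genS (ι : ℕ × Fin 2 → I) (U : Finset I) (k : ℕ) : Set (Finset I) :=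
  {w | ∃ j, w ⊆ genV ι U j ∧ w.card = k}

variable {ι : ℕ × Fin 2 → I} {U : Finset I} {n k : ℕ}

lemma jeq (hι : Function.Injective ι) {j j' : ℕ} {e e' : Fin 2}
    (h : ι (j, e) = ι (j', e')) : j = j' := (Prod.mk.injEq _ _ _ _ ▸ hι h).1

lemma mem_genV {x : I} {j : ℕ} :
    x ∈ genV ι U j ↔ x ∈ U ∨ x = ι (j, 0) ∨ x = ι (j, 1) := by
  simp [genV]; tauto

lemma genV_card (hι : Function.Injective ι) (hdisj : ∀ p, ι p ∉ U)
    (hU : U.card = n - 3) (hn : 3 ≤ n) (j : ℕ) : (genV ι U j).card = n - 1 := by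
  have hne : ι (j, 0) ≠ ι (j, 1) := by
    intro h; have := hι h; simp at this
  have hd : Disjoint U ({ι (j, 0), ι (j, 1)} : Finset I) := by
    rw [Finset.disjoint_right]
    intro a ha
    rcases Finset.mem_insert.mp ha with h | h
    · subst h; exact hdisj _
    · rw [Finset.mem_singleton] at h; subst h; exact hdisj _
  rw [genV, Finset.card_union_of_disjoint hd, hU, Finset.card_pair hne]
  omega

lemma pair_mem_pair (hι : Function.Injective ι) (hdisj : ∀ p, ι p ∉ U) (h2 : 2 ≤ k)
    {v : Finset I} (hS : ∀ w ⊆ v, w.card = k → w ∈ genS ι U k) (hk : k ≤ v.card)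
    {a b : I} (ha : a ∈ v) (hb : b ∈ v) (haU : a ∉ U) (hbU : b ∉ U) (hab : a ≠ b) :
    ∃ j, ({a, b} : Finset I) = {ι (j, 0), ι (j, 1)} := by
  have hsub : ({a, b} : Finset I) ⊆ v := by
    intro x hx
    rcases Finset.mem_insert.mp hx with h | h
    · subst h; exact ha
    · rw [Finset.mem_singleton] at h; subst h; exact hb
  have hcard : ({a, b} : Finset I).card = 2 := Finset.card_pair hab
  obtain ⟨w, hw1, hw2, hw3⟩ :=
    Finset.exists_subsuperset_card_eq hsub (by omega) hk
  obtain ⟨j, hwV, -⟩ := hS w hw2 hw3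
  refine ⟨j, ?_⟩
  have hmem : ∀ x ∈ ({a, b} : Finset I), x ∉ U → x ∈ ({ι (j, 0), ι (j, 1)} : Finset I) := by
    intro x hx hxU
    have := hwV (hw1 hx)
    rcases mem_genV.mp this with h | h | h
    · exact absurd h hxU
    · simp [h]
    · simp [h]
  have hsub2 : ({a, b} : Finset I) ⊆ ({ι (j, 0), ι (j, 1)} : Finset I) := by
    intro x hx
    rcases Finset.mem_insert.mp hx with h | h
    · subst h; exact hmem _ (by simp) haU
    · rw [Finset.mem_singleton] at h; subst h; exact hmem _ (by simp) hbU
  refine Finset.eq_of_subset_of_card_le hsub2 ?_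
  calc ({ι (j, 0), ι (j, 1)} : Finset I).card ≤ 2 := by
        apply le_trans (Finset.card_insert_le _ _); simp
    _ = ({a, b} : Finset I).card := hcard.symm

lemma genS_card (hι : Function.Injective ι) : ∀ w ∈ genS ι U k, w.card = k := by
  rintro w ⟨j, -, h⟩; exact h

lemma genCliqueFree (hι : Function.Injective ι) (hdisj : ∀ p, ι p ∉ U)
    (hU : U.card = n - 3) (h2 : 2 ≤ k) (hkn : k < n) :
    CliqueFreeSet n k (genS ι U k) := by
  rintro ⟨w, hcard, hsubs⟩
  have h3 : 2 < (w \ U).card := by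
    have := Finset.le_card_sdiff U w
    omega
  obtain ⟨s3, hs3, hs3card⟩ := Finset.exists_subset_card_eq (show 3 ≤ (w \ U).card by omega)
  obtain ⟨a, b, c, hab, hac, hbc, rfl⟩ := Finset.card_eq_three.mp hs3card
  have hmem : ∀ x ∈ ({a, b, c} : Finset I), x ∈ w ∧ x ∉ U := by
    intro x hx
    have := hs3 hx
    exact ⟨(Finset.mem_sdiff.mp this).1, (Finset.mem_sdiff.mp this).2⟩
  obtain ⟨haw, haU⟩ := hmem a (by simp)
  obtain ⟨hbw, hbU⟩ := hmem b (by simp)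
  obtain ⟨hcw, hcU⟩ := hmem c (by simp)
  obtain ⟨j1, hj1⟩ := pair_mem_pair hι hdisj h2 hsubs (by omega) haw hbw haU hbU hab
  obtain ⟨j2, hj2⟩ := pair_mem_pair hι hdisj h2 hsubs (by omega) haw hcw haU hcU hac
  -- a belongs to both pairs, so j1 = j2
  have ha1 : a ∈ ({ι (j1, 0), ι (j1, 1)} : Finset I) := by rw [← hj1]; simp
  have ha2 : a ∈ ({ι (j2, 0), ι (j2, 1)} : Finset I) := by rw [← hj2]; simp
  have hj : j1 = j2 := by
    simp only [Finset.mem_insert, Finset.mem_singleton] at ha1 ha2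
    rcases ha1 with h1 | h1 <;> rcases ha2 with h2 | h2 <;>
      exact jeq hι (h1.symm.trans h2)
  have : b ∈ ({a, c} : Finset I) := by
    rw [hj2, ← hj, ← hj1]; simp
  simp only [Finset.mem_insert, Finset.mem_singleton] at this
  rcases this with h | h
  · exact hab h.symm
  · exact hbc h

/-- The image of the pair (j, ε): all (k-1)-subsets u of genV j such that ι(j,1) ∈ u iff ε = 1. -/
def genF (ι : ℕ × Fin 2 → I) (U : Finset I) (k : ℕ) (j : ℕ) (ε : Fin 2) :
    Finset {u : Finset I // u.card = k - 1} :=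
  ((Finset.powersetCard (k - 1) (genV ι U j)).filter
      (fun u => ι (j, 1) ∈ u ↔ ε = 1)).attach.image
    (fun u => ⟨u.1, (Finset.mem_powersetCard.mp (Finset.mem_filter.mp u.2).1).2⟩)

lemma mem_genF {j : ℕ} {ε : Fin 2} {x : {u : Finset I // u.card = k - 1}} :
    x ∈ genF ι U k j ε ↔ x.1 ⊆ genV ι U j ∧ (ι (j, 1) ∈ x.1 ↔ ε = 1) := by
  constructor
  · intro h
    rw [genF, Finset.mem_image] at h
    obtain ⟨a, _, rfl⟩ := h
    have h2 := Finset.mem_filter.mp a.2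
    exact ⟨(Finset.mem_powersetCard.mp h2.1).1, h2.2⟩
  · rintro ⟨h1, h2⟩
    rw [genF, Finset.mem_image]
    exact ⟨⟨x.1, Finset.mem_filter.mpr ⟨Finset.mem_powersetCard.mpr ⟨h1, x.2⟩, h2⟩⟩,
      Finset.mem_attach _ _, Subtype.ext rfl⟩

lemma genF_card_le (hι : Function.Injective ι) (hdisj : ∀ p, ι p ∉ U)
    (hU : U.card = n - 3) (h2 : 2 ≤ k) (hkn : k < n) {istar : ℕ}
    (hb0 : (n - 2).choose (k - 1) ≤ istar) (hb1 : (n - 2).choose (k - 2) ≤ istar)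
    (j : ℕ) (ε : Fin 2) : (genF ι U k j ε).card ≤ istar := by
  have hVc : (genV ι U j).card = n - 1 := genV_card hι hdisj hU (by omega) j
  have hmemV : ι (j, 1) ∈ genV ι U j := mem_genV.mpr (Or.inr (Or.inr rfl))
  have hec : ((genV ι U j).erase (ι (j, 1))).card = n - 2 := by
    rw [Finset.card_erase_of_mem hmemV, hVc]; omega
  have hle : (genF ι U k j ε).card ≤
      ((Finset.powersetCard (k - 1) (genV ι U j)).filter
        (fun u => ι (j, 1) ∈ u ↔ ε = 1)).card := by
    apply le_trans (Finset.card_image_le)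
    rw [Finset.card_attach]
  fin_cases ε
  · -- ε = 0 : subsets avoiding ι(j,1)
    refine le_trans hle (le_trans ?_ hb0)
    have hsub : ((Finset.powersetCard (k - 1) (genV ι U j)).filter
        (fun u => ι (j, 1) ∈ u ↔ (0 : Fin 2) = 1)) ⊆
        Finset.powersetCard (k - 1) ((genV ι U j).erase (ι (j, 1))) := by
      intro u hu
      rw [Finset.mem_filter, Finset.mem_powersetCard] at hu
      rw [Finset.mem_powersetCard]
      have hnot : ι (j, 1) ∉ u := by
        intro hh
        have := hu.2.mp hh
        simp at this
      exact ⟨Finset.subset_erase.mpr ⟨hu.1.1, hnot⟩, hu.1.2⟩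
    calc _ ≤ (Finset.powersetCard (k - 1) ((genV ι U j).erase (ι (j, 1)))).card :=
          Finset.card_le_card hsub
      _ = (n - 2).choose (k - 1) := by rw [Finset.card_powersetCard, hec]
  · -- ε = 1 : subsets containing ι(j,1)
    refine le_trans hle (le_trans ?_ hb1)
    have key : ((Finset.powersetCard (k - 1) (genV ι U j)).filter
        (fun u => ι (j, 1) ∈ u ↔ (1 : Fin 2) = 1)).card ≤
        (Finset.powersetCard (k - 2) ((genV ι U j).erase (ι (j, 1)))).card := by
      apply Finset.card_le_card_of_injOn (fun u => u.erase (ι (j, 1)))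
      · intro u hu
        rw [Finset.mem_coe, Finset.mem_filter, Finset.mem_powersetCard] at hu
        have hin : ι (j, 1) ∈ u := hu.2.mpr rfl
        rw [Finset.mem_coe, Finset.mem_powersetCard]
        constructor
        · exact Finset.erase_subset_erase _ hu.1.1
        · rw [Finset.card_erase_of_mem hin, hu.1.2]; omega
      · intro u hu u' hu' h
        rw [Finset.coe_filter, Set.mem_setOf_eq] at hu hu'
        have hi : ι (j, 1) ∈ u := hu.2.mpr rfl
        have hi' : ι (j, 1) ∈ u' := hu'.2.mpr rfl
        have h' : u.erase (ι (j, 1)) = u'.erase (ι (j, 1)) := h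
        rw [← Finset.insert_erase hi, ← Finset.insert_erase hi', h']
    calc _ ≤ (Finset.powersetCard (k - 2) ((genV ι U j).erase (ι (j, 1)))).card := key
      _ = (n - 2).choose (k - 2) := by rw [Finset.card_powersetCard, hec]

theorem genInstance (hι : Function.Injective ι) (hdisj : ∀ p, ι p ∉ U)
    (hU : U.card = n - 3) (h2 : 2 ≤ k) (hkn : k < n) {istar : ℕ}
    (hb0 : (n - 2).choose (k - 1) ≤ istar) (hb1 : (n - 2).choose (k - 2) ≤ istar) :
    IsInstanceOf deltaIP (patternPow (deltaNK n k (genS ι U k)) istar) := by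
  intro s
  classical
  refine ⟨fun p => ⟨genF ι U k p.1 p.2, genF_card_le hι hdisj hU h2 hkn hb0 hb1 p.1 p.2⟩,
    fun t _ => ?_⟩
  simp only [patternPow, deltaNK, deltaIP, Set.mem_setOf_eq]
  rw [← not_exists]
  apply not_congr
  simp only [Finset.mem_sup, Finset.mem_image, exists_exists_and_eq_and]
  constructor
  · rintro ⟨j, hj0, hj1⟩
    refine ⟨genV ι U j, genV_card hι hdisj hU (by omega) j, ?_, ?_⟩
    · intro u hu hsub
      by_cases hm : ι (j, 1) ∈ u
      · exact ⟨(j, 1), hj1, mem_genF.mpr ⟨hsub, by simp [hm]⟩⟩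
      · refine ⟨(j, 0), hj0, mem_genF.mpr ⟨hsub, ?_⟩⟩
        simp only [hm, false_iff]
        decide
    · intro w hw hwc
      exact ⟨j, hw, hwc⟩
  · rintro ⟨v, hvc, hsubs, hS⟩
    -- find the pair inside v
    have hk1 : k ≤ v.card := by omega
    have h2lt : 1 < (v \ U).card := by
      have := Finset.le_card_sdiff U v
      omega
    obtain ⟨a, ha, b, hb, hab⟩ := Finset.one_lt_card.mp h2lt
    rw [Finset.mem_sdiff] at ha hb
    obtain ⟨j, hjpair⟩ := pair_mem_pair hι hdisj h2 hS hk1 ha.1 hb.1 ha.2 hb.2 hab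
    -- v = genV j
    have hpairv : ι (j, 0) ∈ v ∧ ι (j, 1) ∈ v := by
      have h0 : ι (j, 0) ∈ ({a, b} : Finset I) := by rw [hjpair]; simp
      have h1 : ι (j, 1) ∈ ({a, b} : Finset I) := by rw [hjpair]; simp
      constructor
      · rcases Finset.mem_insert.mp h0 with h | h
        · rw [h]; exact ha.1
        · rw [Finset.mem_singleton] at h; rw [h]; exact hb.1
      · rcases Finset.mem_insert.mp h1 with h | h
        · rw [h]; exact ha.1
        · rw [Finset.mem_singleton] at h; rw [h]; exact hb.1
    have hvsub : v ⊆ genV ι U j := by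
      intro x hx
      by_cases hxU : x ∈ U
      · exact mem_genV.mpr (Or.inl hxU)
      by_cases hxa : x = a
      · have hax : a ∈ ({a, b} : Finset I) := by simp
        rw [hjpair] at hax
        rw [hxa]
        rcases Finset.mem_insert.mp hax with h | h
        · exact mem_genV.mpr (Or.inr (Or.inl h))
        · rw [Finset.mem_singleton] at h; exact mem_genV.mpr (Or.inr (Or.inr h))
      obtain ⟨j', hj'⟩ := pair_mem_pair hι hdisj h2 hS hk1 hx ha.1 hxU ha.2 hxa
      have haj' : a ∈ ({ι (j', 0), ι (j', 1)} : Finset I) := by rw [← hj']; simp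
      have haj : a ∈ ({ι (j, 0), ι (j, 1)} : Finset I) := by rw [← hjpair]; simp
      have hjj : j' = j := by
        simp only [Finset.mem_insert, Finset.mem_singleton] at haj' haj
        rcases haj' with h1 | h1 <;> rcases haj with h2 | h2 <;>
          exact jeq hι (h1.symm.trans h2)
      have hxj : x ∈ ({ι (j, 0), ι (j, 1)} : Finset I) := by
        rw [← hjj, ← hj']; simp
      rcases Finset.mem_insert.mp hxj with h | h
      · exact mem_genV.mpr (Or.inr (Or.inl h))
      · rw [Finset.mem_singleton] at h; exact mem_genV.mpr (Or.inr (Or.inr h))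
    have hveq : v = genV ι U j := by
      apply Finset.eq_of_subset_of_card_le hvsub
      rw [genV_card hι hdisj hU (by omega) j, hvc]
    -- build the two (k-1)-subsets u₀, u₁
    obtain ⟨D, hDU, hDc⟩ := Finset.exists_subset_card_eq
      (show k - 2 ≤ U.card by omega)
    have hD0 : ι (j, 0) ∉ D := fun h => hdisj _ (hDU h)
    have hD1 : ι (j, 1) ∉ D := fun h => hdisj _ (hDU h)
    have hUv : U ⊆ v := by rw [hveq]; exact Finset.subset_union_left
    have main : ∀ ε : Fin 2, (j, ε) ∈ t := by
      intro ε
      have huc : (insert (ι (j, ε)) D).card = k - 1 := by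
        rw [Finset.card_insert_of_notMem (by fin_cases ε <;> assumption), hDc]
        omega
      have husub : insert (ι (j, ε)) D ⊆ v := by
        apply Finset.insert_subset
        · fin_cases ε
          · exact hpairv.1
          · exact hpairv.2
        · exact hDU.trans hUv
      obtain ⟨⟨j', ε'⟩, hpt, hPx⟩ := hsubs _ huc husub
      obtain ⟨hFsub, hFiff⟩ := mem_genF.mp hPx
      -- analyze
      have hεj : ι (j, ε) ∈ insert (ι (j, ε)) D := Finset.mem_insert_self _ _
      fin_cases ε
      · -- inserted ι(j,0); claim ε' = 0 and j' = j
        fin_cases ε'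
        · -- ε' = 0 : ι(j',1) ∉ u₀, and ι(j,0) ∈ genV j'
          have hnot : ι (j', 1) ∉ insert (ι (j, 0)) D := by
            intro hh
            have := hFiff.mp hh
            simp at this
          have := hFsub hεj
          rcases mem_genV.mp this with h | h | h
          · exact absurd h (hdisj _)
          · have := jeq hι h
            rwa [this]
          · exact absurd (h ▸ hεj) hnot
        · -- ε' = 1 : ι(j',1) ∈ u₀ : impossible
          have hin : ι (j', 1) ∈ insert (ι (j, 0)) D := hFiff.mpr rfl
          rcases Finset.mem_insert.mp hin with h | h
          · have := hι h; simp at this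
          · exact absurd h (fun hh => hdisj _ (hDU hh))
      · -- inserted ι(j,1); claim ε' = 1 and j' = j
        fin_cases ε'
        · -- ε' = 0 : ι(j',1) ∉ u₁, but ι(j,1) ∈ genV j'
          have hnot : ι (j', 1) ∉ insert (ι (j, 1)) D := by
            intro hh
            have := hFiff.mp hh
            simp at this
          have := hFsub hεj
          rcases mem_genV.mp this with h | h | h
          · exact absurd h (hdisj _)
          · have := hι h; simp at this
          · exact absurd (h ▸ hεj) hnot
        · -- ε' = 1 : ι(j',1) ∈ u₁ = insert ι(j,1) D
          have hin : ι (j', 1) ∈ insert (ι (j, 1)) D := hFiff.mpr rfl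
          rcases Finset.mem_insert.mp hin with h | h
          · have := jeq hι h
            rwa [← this]
          · exact absurd h (fun hh => hdisj _ (hDU hh))
    exact ⟨j, main 0, main 1⟩

end Gen

theorem statement8 (k : ℕ) (h2 : 2 ≤ k) :
    (∀ w ∈ ipHyper k, w.card = k) ∧
    CliqueFreeSet (k + 1) k (ipHyper k) ∧
    IsInstanceOf deltaIP (patternPow (deltaNK (k + 1) k (ipHyper k)) (k - 1)) ∧
    ∀ n : ℕ, k < n →
      ∃ (I : Type) (S : Set (Finset I)) (istar : ℕ),
        (∀ v ∈ S, v.card = k) ∧ CliqueFreeSet n k S ∧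
        IsInstanceOf deltaIP (patternPow (deltaNK n k S) istar) := by
  have hι : Function.Injective (Sum.inl : ℕ × Fin 2 → (ℕ × Fin 2) ⊕ Fin (k - 2)) :=
    Sum.inl_injective
  have hdisj : ∀ p : ℕ × Fin 2,
      (Sum.inl p : (ℕ × Fin 2) ⊕ Fin (k - 2)) ∉ (Finset.univ.image Sum.inr) := by
    simp
  have hUc : (Finset.univ.image (Sum.inr : Fin (k - 2) → (ℕ × Fin 2) ⊕ Fin (k - 2))).card
      = (k + 1) - 3 := by
    rw [Finset.card_image_of_injective _ Sum.inr_injective, Finset.card_univ,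
      Fintype.card_fin]
    omega
  have hkn : k < k + 1 := Nat.lt_succ_self k
  have hcardV : ∀ j, (genV Sum.inl
      (Finset.univ.image (Sum.inr : Fin (k - 2) → (ℕ × Fin 2) ⊕ Fin (k - 2))) j).card = k := by
    intro j
    have := genV_card hι hdisj hUc (by omega) j
    simpa using this
  have hSeq : ipHyper k = genS Sum.inl (Finset.univ.image Sum.inr) k := by
    ext w
    simp only [ipHyper, genS, Set.mem_setOf_eq]
    constructor
    · rintro ⟨j, rfl⟩
      exact ⟨j, subset_rfl, hcardV j⟩
    · rintro ⟨j, hsub, hc⟩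
      refine ⟨j, ?_⟩
      refine Finset.eq_of_subset_of_card_le hsub ?_
      show (genV Sum.inl (Finset.univ.image Sum.inr) j).card ≤ w.card
      rw [hcardV j, hc]
  refine ⟨?_, ?_, ?_, ?_⟩
  · intro w hw
    rw [hSeq] at hw
    obtain ⟨j, -, hc⟩ := hw
    exact hc
  · rw [hSeq]
    exact genCliqueFree hι hdisj hUc h2 hkn
  · rw [hSeq]
    apply genInstance hι hdisj hUc h2 hkn
    · rw [show (k + 1) - 2 = k - 1 by omega, Nat.choose_self]
      omega
    · rw [show (k + 1) - 2 = k - 1 by omega, show k - 2 = (k - 1) - 1 by omega,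
        Nat.choose_symm (by omega : 1 ≤ k - 1), Nat.choose_one_right]
  · intro n hkltn
    have hι' : Function.Injective (Sum.inl : ℕ × Fin 2 → (ℕ × Fin 2) ⊕ Fin (n - 3)) :=
      Sum.inl_injective
    have hdisj' : ∀ p : ℕ × Fin 2,
        (Sum.inl p : (ℕ × Fin 2) ⊕ Fin (n - 3)) ∉ (Finset.univ.image Sum.inr) := by
      simp
    have hUc' : (Finset.univ.image (Sum.inr : Fin (n - 3) → (ℕ × Fin 2) ⊕ Fin (n - 3))).card
        = n - 3 := by
      rw [Finset.card_image_of_injective _ Sum.inr_injective, Finset.card_univ,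
        Fintype.card_fin]
    refine ⟨(ℕ × Fin 2) ⊕ Fin (n - 3), genS Sum.inl (Finset.univ.image Sum.inr) k,
      (n - 2).choose (k - 1) + (n - 2).choose (k - 2), ?_, ?_, ?_⟩
    · exact genS_card hι'
    · exact genCliqueFree hι' hdisj' hUc' h2 hkltn
    · exact genInstance hι' hdisj' hUc' h2 hkltn (Nat.le_add_right _ _) (Nat.le_add_left _ _)
end

section
/- Let B be a complete Boolean algebra, write λ = c.c.(B), and let U be an ℵ₁-incomplete ultrafilter on B. Then there is a (λ, Δ(FDP))-distribution A in U such that whenever e : B → B* is a complete embedding of B into a complete Boolean algebra B* that has the λ-c.c. (every antichain of B* has cardinality < λ), the λ-distribution s ↦ e(A(s)) has no multiplicative refinement in B*: there is no multiplicative λ-distribution D in B* with D(s) ≤ e(A(s)) for all finite s ⊆ λ. -/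
universe u v

section BA

variable {B : Type u} [CompleteBooleanAlgebra B]

/-- U is an ultrafilter on the complete Boolean algebra B. -/
def IsUltra (U : Set B) : Prop :=
  ⊤ ∈ U ∧ ⊥ ∉ U ∧ (∀ a ∈ U, ∀ b : B, a ≤ b → b ∈ U) ∧
    (∀ a ∈ U, ∀ b ∈ U, a ⊓ b ∈ U) ∧ ∀ a : B, a ∈ U ∨ aᶜ ∈ U

/-- c decides b if c ≤ b or c ≤ bᶜ. -/
def Decides (c b : B) : Prop := c ≤ b ∨ c ≤ bᶜ

/-- A λ-distribution (with index set ι of cardinality λ): a map from finite subsets of λ to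
the nonzero elements of B, sending ∅ to ⊤ and reversing inclusions. -/
def IsDistribution {ι : Type*} (A : Finset ι → B) : Prop :=
  (∀ s, A s ≠ ⊥) ∧ A ∅ = ⊤ ∧ ∀ s t : Finset ι, t ⊆ s → A s ≤ A t

/-- A distribution is multiplicative if A(s) = ⨅_{α∈s} A({α}). -/
def IsMultiplicative {ι : Type*} (A : Finset ι → B) : Prop :=
  ∀ s : Finset ι, A s = s.inf (fun α => A {α})

/-- A family (a_α)_{α<λ} is λ-regular: finite subfamilies have nonzero meet, infinite
subfamilies have meet ⊥, and the nonzero elements deciding every a_α are dense in B₊. -/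
def IsRegularFamily {ι : Type*} (a : ι → B) : Prop :=
  (∀ s : Finset ι, s.inf a ≠ ⊥) ∧
  (∀ X : Set ι, X.Infinite → (⨅ α ∈ X, a α) = ⊥) ∧
  (∀ b : B, b ≠ ⊥ → ∃ c : B, c ≠ ⊥ ∧ c ≤ b ∧ ∀ α : ι, Decides c (a α))

/-- A name for a natural number: a map n : ω → B with pairwise disjoint values
whose supremum is ⊤. -/
def IsName (nm : ℕ → B) : Prop :=
  (∀ i j : ℕ, i ≠ j → Disjoint (nm i) (nm j)) ∧ (⨆ m : ℕ, nm m) = ⊤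

/-- ‖n ≥ m‖ := ⨆_{j≥m} n(j). -/
def nameGe (nm : ℕ → B) (m : ℕ) : B := ⨆ j : ℕ, ⨆ _ : m ≤ j, nm j

/-- n is U-nonstandard if ‖n ≥ m‖ ∈ U for every m. -/
def IsNonstandardName (U : Set B) (nm : ℕ → B) : Prop := ∀ m : ℕ, nameGe nm m ∈ U

/-- U is ℵ₁-incomplete: some decreasing ω-sequence from U has infimum ⊥. -/
def Aleph1Incomplete (U : Set B) : Prop :=
  ∃ c : ℕ → B, (∀ k, c k ∈ U) ∧ Antitone c ∧ (⨅ k : ℕ, c k) = ⊥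


/-- An antichain in B: a set of pairwise-disjoint nonzero elements. -/
def IsAntichainIn {B : Type*} [CompleteBooleanAlgebra B] (A : Set B) : Prop :=
  (∀ a ∈ A, a ≠ ⊥) ∧ A.Pairwise (fun a b => a ⊓ b = ⊥)

/-- c.c.(B): the least cardinal κ such that B has no antichain of cardinality κ. -/
noncomputable def ccOf (B : Type u) [CompleteBooleanAlgebra B] : Cardinal.{u} :=
  sInf {κ : Cardinal.{u} | ¬ ∃ A : Set B, IsAntichainIn A ∧ Cardinal.mk A = κ}

/-- A is a (λ, Δ)-distribution: for every finite s ⊆ λ and nonzero c deciding A(t) for all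
t ⊆ s, there is f : s → I with, for all t ⊆ s, c ≤ A(t) iff f[t] ∈ Δ. -/
def IsDeltaDistribution {B : Type*} [CompleteBooleanAlgebra B] {ι : Type*} {I : Type*}
    (A : Finset ι → B) (Δ : Set (Finset I)) : Prop :=
  ∀ (s : Finset ι) (c : B), c ≠ ⊥ → (∀ t ⊆ s, Decides c (A t)) →
    ∃ f : ι → I, ∀ t ⊆ s, (c ≤ A t ↔ (letI := Classical.decEq I; t.image f) ∈ Δ)

/-- A complete embedding of complete Boolean algebras: an injective homomorphism preserving
arbitrary suprema and infima. -/
def IsCompleteEmbedding {B : Type*} {B' : Type*} [CompleteBooleanAlgebra B]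
    [CompleteBooleanAlgebra B'] (e : B → B') : Prop :=
  Function.Injective e ∧ (∀ a b : B, e (a ⊓ b) = e a ⊓ e b) ∧
    (∀ a b : B, e (a ⊔ b) = e a ⊔ e b) ∧ (∀ a : B, e aᶜ = (e a)ᶜ) ∧
    (∀ S : Set B, e (sSup S) = sSup (e '' S)) ∧ (∀ S : Set B, e (sInf S) = sInf (e '' S))

/-- The pattern Δ(FDP) on (ω∖{0}) × ω: finite sets s such that for some m ≥ 1,
s ⊆ {m} × ω and |s| ≤ m. -/
def deltaFDP : Set (Finset ({m : ℕ // 0 < m} × ℕ)) :=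
  {s | ∃ m : {m : ℕ // 0 < m}, (∀ p ∈ s, p.1 = m) ∧ s.card ≤ (m : ℕ)}

namespace S15

variable {B : Type u} [CompleteBooleanAlgebra B]

/-- auxiliary decreasing sequence: d 0 = d 1 = ⊤, d (k+2) = c k. -/
def dSeq (c : ℕ → B) : ℕ → B := fun k => if k ≤ 1 then ⊤ else c (k - 2)

/-- the "levels": w m = d m \ d (m+1), w 0 = ⊥. -/
def wSeq (c : ℕ → B) : ℕ → B := fun m => if m = 0 then ⊥ else dSeq c m ⊓ (dSeq c (m + 1))ᶜ

theorem dSeq_antitone {c : ℕ → B} (hc : Antitone c) : Antitone (dSeq c) := by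
  intro k l hkl
  by_cases hk : k ≤ 1
  · simp [dSeq, hk]
  · have hl : ¬ l ≤ 1 := fun h => hk (hkl.trans h)
    simp only [dSeq, if_neg hk, if_neg hl]
    exact hc (by omega)

theorem dSeq_zero (c : ℕ → B) : dSeq c 0 = ⊤ := by simp [dSeq]

theorem dSeq_one (c : ℕ → B) : dSeq c 1 = ⊤ := by simp [dSeq]

theorem iInf_dSeq {c : ℕ → B} (hcInf : (⨅ k, c k) = ⊥) : (⨅ k, dSeq c k) = ⊥ := by
  refine le_antisymm ?_ bot_le
  rw [← hcInf]
  refine le_iInf fun k => ?_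
  have h : dSeq c (k + 2) = c k := by simp [dSeq]
  exact (iInf_le (dSeq c) (k + 2)).trans h.le

theorem wSeq_le (c : ℕ → B) (m : ℕ) : wSeq c m ≤ dSeq c m := by
  by_cases h : m = 0
  · simp [wSeq, h]
  · simp only [wSeq, if_neg h]; exact inf_le_left

theorem wSeq_le_compl (c : ℕ → B) {m : ℕ} (h : m ≠ 0) : wSeq c m ≤ (dSeq c (m + 1))ᶜ := by
  simp only [wSeq, if_neg h]; exact inf_le_right

theorem wSeq_disj {c : ℕ → B} (hc : Antitone c) {m n : ℕ} (h : m ≠ n) :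
    wSeq c m ⊓ wSeq c n = ⊥ := by
  have key : ∀ m n : ℕ, m < n → wSeq c m ⊓ wSeq c n = ⊥ := by
    intro m n hmn
    rcases Nat.eq_zero_or_pos m with rfl | hm
    · simp [wSeq]
    · have h1 : wSeq c n ≤ dSeq c (m + 1) :=
        (wSeq_le c n).trans (dSeq_antitone hc (by omega))
      have h2 : wSeq c m ≤ (dSeq c (m + 1))ᶜ := wSeq_le_compl c (by omega)
      have : wSeq c m ⊓ wSeq c n ≤ (dSeq c (m + 1))ᶜ ⊓ dSeq c (m + 1) := inf_le_inf h2 h1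
      rw [compl_inf_eq_bot] at this
      exact le_bot_iff.mp this
  rcases h.lt_or_gt with h' | h'
  · exact key m n h'
  · rw [inf_comm]; exact key n m h'

theorem wSeq_inf_dSeq {c : ℕ → B} (hc : Antitone c) {m k : ℕ} (h : m < k) :
    wSeq c m ⊓ dSeq c k = ⊥ := by
  rcases Nat.eq_zero_or_pos m with rfl | hm
  · simp [wSeq]
  · have h1 : dSeq c k ≤ dSeq c (m + 1) := dSeq_antitone hc (by omega)
    have h2 : wSeq c m ⊓ dSeq c k ≤ (dSeq c (m + 1))ᶜ ⊓ dSeq c (m + 1) :=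
      inf_le_inf (wSeq_le_compl c (by omega)) h1
    rw [compl_inf_eq_bot] at h2
    exact le_bot_iff.mp h2

theorem dSeq_le_iSup_wSeq {c : ℕ → B} (hc : Antitone c) (hcInf : (⨅ k, c k) = ⊥)
    {k : ℕ} (hk : 1 ≤ k) : dSeq c k ≤ ⨆ m, ⨆ _ : k ≤ m, wSeq c m := by
  set W : B := ⨆ m, ⨆ _ : k ≤ m, wSeq c m with hW
  have key : ∀ j, dSeq c k ⊓ Wᶜ ≤ dSeq c (k + j) := by
    intro j
    induction j with
    | zero => exact inf_le_left
    | succ j ih =>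
      have hwW : wSeq c (k + j) ≤ W := by
        refine le_trans ?_ (le_iSup _ (k + j))
        exact le_iSup (fun _ : k ≤ k + j => wSeq c (k + j)) (by omega)
      have h1 : Wᶜ ≤ (wSeq c (k + j))ᶜ := compl_le_compl hwW
      have h2 : (wSeq c (k + j))ᶜ = (dSeq c (k + j))ᶜ ⊔ dSeq c (k + j + 1) := by
        have : k + j ≠ 0 := by omega
        simp only [wSeq, if_neg this, compl_inf, compl_compl]
      have h3 : dSeq c k ⊓ Wᶜ ≤ dSeq c (k + j) ⊓ ((dSeq c (k + j))ᶜ ⊔ dSeq c (k + j + 1)) := by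
        refine le_inf ih (le_trans inf_le_right (h1.trans h2.le))
      calc dSeq c k ⊓ Wᶜ ≤ dSeq c (k + j) ⊓ ((dSeq c (k + j))ᶜ ⊔ dSeq c (k + j + 1)) := h3
        _ = (dSeq c (k + j) ⊓ (dSeq c (k + j))ᶜ) ⊔ (dSeq c (k + j) ⊓ dSeq c (k + j + 1)) :=
            inf_sup_left _ _ _
        _ ≤ dSeq c (k + j + 1) := by
            rw [inf_compl_eq_bot, bot_sup_eq]; exact inf_le_right
  have hbot : dSeq c k ⊓ Wᶜ = ⊥ := by
    have h4 : dSeq c k ⊓ Wᶜ ≤ ⨅ i, dSeq c i := by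
      refine le_iInf fun i => ?_
      exact (key i).trans (dSeq_antitone hc (by omega))
    rw [iInf_dSeq hcInf] at h4
    exact le_bot_iff.mp h4
  have : dSeq c k \ W = ⊥ := by rw [sdiff_eq]; exact hbot
  exact sdiff_eq_bot_iff.mp this

theorem iSup_wSeq_top {c : ℕ → B} (hc : Antitone c) (hcInf : (⨅ k, c k) = ⊥) :
    (⨆ m, wSeq c m) = ⊤ := by
  refine top_unique ?_
  have h1 : (⊤ : B) ≤ ⨆ m, ⨆ _ : 1 ≤ m, wSeq c m := by
    have := dSeq_le_iSup_wSeq hc hcInf (k := 1) le_rfl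
    rwa [dSeq_one] at this
  exact h1.trans (iSup_le fun m => iSup_le fun _ => le_iSup _ m)

end S15

theorem statement15 {B : Type u} [CompleteBooleanAlgebra B]
    (U : Set B) (hU : IsUltra U) (hinc : Aleph1Incomplete U)
    (lam : Cardinal.{u}) (hlam : lam = ccOf B)
    (ι : Type u) (hι : Cardinal.mk ι = lam) :
    ∃ A : Finset ι → B, IsDistribution A ∧ (∀ s, A s ∈ U) ∧
      IsDeltaDistribution A deltaFDP ∧
      ∀ (B' : Type v) [CompleteBooleanAlgebra B'] (e : B → B'),
        IsCompleteEmbedding e →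
        (∀ A' : Set B', IsAntichainIn A' →
          Cardinal.lift.{u} (Cardinal.mk A') < Cardinal.lift.{v} lam) →
        ¬ ∃ D : Finset ι → B', IsDistribution D ∧ IsMultiplicative D ∧
            ∀ s : Finset ι, D s ≤ e (A s) := by
  classical
  obtain ⟨c, hcU, hcAnti, hcInf⟩ := hinc
  set d : ℕ → B := S15.dSeq c with hd
  set w : ℕ → B := S15.wSeq c with hw
  have hdanti : Antitone d := S15.dSeq_antitone hcAnti
  have hd0 : d 0 = ⊤ := S15.dSeq_zero c
  have hd1 : d 1 = ⊤ := S15.dSeq_one c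
  have hdU : ∀ k, d k ∈ U := by
    intro k
    by_cases hk : k ≤ 1
    · simpa [hd, S15.dSeq, hk] using hU.1
    · simpa [hd, S15.dSeq, hk] using hcU (k - 2)
  have hdbot : ∀ k, d k ≠ ⊥ := fun k h => hU.2.1 (h ▸ hdU k)
  have hw0 : w 0 = ⊥ := by simp [hw, S15.wSeq]
  have hwdisj : ∀ m n : ℕ, m ≠ n → w m ⊓ w n = ⊥ := fun m n h => S15.wSeq_disj hcAnti h
  have hwd : ∀ m k : ℕ, m < k → w m ⊓ d k = ⊥ := fun m k h => S15.wSeq_inf_dSeq hcAnti h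
  have hwtop : (⨆ m, w m) = ⊤ := S15.iSup_wSeq_top hcAnti hcInf
  have hdlesup : ∀ k : ℕ, 1 ≤ k → d k ≤ ⨆ m, ⨆ _ : k ≤ m, w m :=
    fun k hk => S15.dSeq_le_iSup_wSeq hcAnti hcInf hk
  -- λ is uncountable
  have haleph : Cardinal.aleph0 < lam := by
    have hinfset : {m : ℕ | w m ≠ ⊥}.Infinite := by
      by_contra hfin
      rw [Set.not_infinite] at hfin
      obtain ⟨N, hN⟩ := hfin.bddAbove
      have hsup : (⨆ m, ⨆ _ : N + 1 ≤ m, w m) = ⊥ := by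
        refine le_antisymm (iSup_le fun m => iSup_le fun hm => ?_) bot_le
        have hwm : w m = ⊥ := by
          by_contra hne
          have := hN hne
          omega
        rw [hwm]
      have h6 := hdlesup (N + 1) (by omega)
      rw [hsup] at h6
      exact hdbot _ (le_bot_iff.mp h6)
    have hinj : Set.InjOn w {m : ℕ | w m ≠ ⊥} := by
      intro m hm n hn hmn
      by_contra hne
      have h7 := hwdisj m n hne
      rw [hmn, inf_idem] at h7
      exact hn h7
    set W : Set B := w '' {m : ℕ | w m ≠ ⊥} with hW
    have hWanti : IsAntichainIn W := by
      constructor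
      · rintro x ⟨m, hm, rfl⟩; exact hm
      · rintro x ⟨m, hm, rfl⟩ y ⟨n, hn, rfl⟩ hxy
        exact hwdisj m n (fun h => hxy (by rw [h]))
    have hWmk : Cardinal.mk W = Cardinal.aleph0 := by
      refine le_antisymm ?_ ?_
      · exact ((Set.to_countable _).image w).le_aleph0
      · have : Infinite W := (hinfset.image hinj).to_subtype
        exact Cardinal.aleph0_le_mk W
    rw [hlam]
    show Cardinal.aleph0 < sInf {κ : Cardinal.{u} |
      ¬ ∃ A : Set B, IsAntichainIn A ∧ Cardinal.mk A = κ}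
    set S := {κ : Cardinal.{u} | ¬ ∃ A : Set B, IsAntichainIn A ∧ Cardinal.mk A = κ} with hS
    have hSne : S.Nonempty := by
      refine ⟨Order.succ (Cardinal.mk B), ?_⟩
      rintro ⟨A, _, hAk⟩
      have h1 : Cardinal.mk A ≤ Cardinal.mk B := Cardinal.mk_set_le A
      rw [hAk] at h1
      exact (Order.lt_succ (Cardinal.mk B)).not_ge h1
    have hmem : sInf S ∈ S := csInf_mem hSne
    by_contra hle
    push_neg at hle
    rw [← hWmk] at hle
    obtain ⟨p, hpsub, hpmk⟩ := Cardinal.le_mk_iff_exists_subset.mp hle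
    exact hmem ⟨p, ⟨fun a ha => hWanti.1 a (hpsub ha), hWanti.2.mono hpsub⟩, hpmk⟩
  refine ⟨fun s => d s.card, ⟨fun s => hdbot _, by simpa using hd0,
    fun s t hts => hdanti (Finset.card_le_card hts)⟩, fun s => hdU _, ?_, ?_⟩
  · -- IsDeltaDistribution
    intro s c0 hc0 _hdec
    letI instI : DecidableEq ({m : ℕ // 0 < m} × ℕ) := Classical.decEq _
    by_cases hs : s = ∅
    · subst hs
      refine ⟨fun _ => (⟨1, Nat.one_pos⟩, 0), ?_⟩
      intro t ht
      have ht' : t = ∅ := Finset.subset_empty.mp ht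
      subst ht'
      constructor
      · intro _
        exact ⟨⟨1, Nat.one_pos⟩, by simp, by simp⟩
      · intro _
        show c0 ≤ d (Finset.card ∅)
        rw [Finset.card_empty, hd0]
        exact le_top
    · have hs1 : 1 ≤ s.card := Finset.card_pos.mpr (Finset.nonempty_iff_ne_empty.mpr hs)
      set K : Finset ℕ := (Finset.range (s.card + 1)).filter (fun k => c0 ≤ d k) with hK
      have h1K : (1 : ℕ) ∈ K := by
        rw [hK, Finset.mem_filter, Finset.mem_range]
        exact ⟨by omega, by rw [hd1]; exact le_top⟩
      have hKne : K.Nonempty := ⟨1, h1K⟩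
      set k0 : ℕ := K.max' hKne with hk0
      have hk0K : k0 ∈ K := K.max'_mem hKne
      have hk0pos : 0 < k0 := lt_of_lt_of_le Nat.one_pos (K.le_max' 1 h1K)
      have hck0 : c0 ≤ d k0 := (Finset.mem_filter.mp hk0K).2
      have hiff : ∀ t : Finset ι, t ⊆ s → (c0 ≤ d t.card ↔ t.card ≤ k0) := by
        intro t hts
        constructor
        · intro h
          refine K.le_max' _ ?_
          rw [hK, Finset.mem_filter, Finset.mem_range]
          exact ⟨by have := Finset.card_le_card hts; omega, h⟩
        · intro h
          exact hck0.trans (hdanti h)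
      set f : ι → {m : ℕ // 0 < m} × ℕ :=
        fun α => (⟨k0, hk0pos⟩, s.toList.idxOf α) with hf
      have hinj : Set.InjOn f ↑s := by
        intro a ha b hb hab
        have h2 : s.toList.idxOf a = s.toList.idxOf b := congrArg Prod.snd hab
        exact (List.idxOf_inj (Finset.mem_toList.mpr ha)).mp h2
      refine ⟨f, ?_⟩
      intro t hts
      have hcard : (t.image f).card = t.card :=
        Finset.card_image_of_injOn (hinj.mono (by exact_mod_cast hts))
      show c0 ≤ d t.card ↔ t.image f ∈ deltaFDP
      rw [hiff t hts]
      constructor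
      · intro hle
        refine ⟨⟨k0, hk0pos⟩, ?_, by rw [hcard]; exact hle⟩
        intro p hp
        obtain ⟨a, _, rfl⟩ := Finset.mem_image.mp hp
        rfl
      · rintro ⟨m, hrow, hcard2⟩
        rcases Finset.eq_empty_or_nonempty t with rfl | ⟨a, ha⟩
        · simp
        · have hfa : f a ∈ t.image f := Finset.mem_image_of_mem f ha
          have h3 : (⟨k0, hk0pos⟩ : {m : ℕ // 0 < m}) = m := hrow _ hfa
          have h4 : (t.image f).card ≤ (m : ℕ) := hcard2
          rw [← h3] at h4
          rw [← hcard]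
          exact h4
  · -- no multiplicative refinement
    intro B' instB' e he hcc hD
    obtain ⟨D, hDdist, hDmult, hDle⟩ := hD
    obtain ⟨heInj, heInf, heSup, heCompl, hesSup, hesInf⟩ := he
    have hebot : e ⊥ = ⊥ := by simpa using hesSup ∅
    have hwtope : (⨆ m, e (w m)) = ⊤ := by
      have h1 : e (sSup (Set.range w)) = sSup (e '' Set.range w) := hesSup _
      rw [← Set.range_comp] at h1
      have h2 : sSup (Set.range w) = ⨆ m, w m := rfl
      have h3 : sSup (Set.range (e ∘ w)) = ⨆ m, e (w m) := rfl
      have h4 : e ⊤ = ⊤ := by simpa using hesInf ∅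
      rw [h2, hwtop, h4] at h1
      rw [← h3, ← h1]
    have hM : ∀ α : ι, ∃ m, D {α} ⊓ e (w m) ≠ ⊥ := by
      intro α
      by_contra hcon
      push_neg at hcon
      have h5 : D {α} = D {α} ⊓ ⨆ m, e (w m) := by rw [hwtope, inf_top_eq]
      rw [inf_iSup_eq] at h5
      simp only [hcon] at h5
      exact hDdist.1 {α} (by simpa using h5)
    choose M hMne using hM
    have hMpos : ∀ α, 0 < M α := by
      intro α
      rcases Nat.eq_zero_or_pos (M α) with h | h
      · exact absurd (by rw [h, hw0, hebot, inf_bot_eq]) (hMne α)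
      · exact h
    have hbound : ∀ (m : ℕ) (t : Finset ι), m < t.card → D t ⊓ e (w m) = ⊥ := by
      intro m t h
      have h1 : D t ⊓ e (w m) ≤ e (d t.card ⊓ w m) := by
        rw [heInf]; exact inf_le_inf (hDle t) le_rfl
      have h2 : d t.card ⊓ w m = ⊥ := by rw [inf_comm]; exact hwd m _ h
      rw [h2, hebot] at h1
      exact le_bot_iff.mp h1
    have hP1 : ∀ α : ι, ∃ u : Finset ι, α ∈ u ∧ u.card = 1 ∧ D u ⊓ e (w (M α)) ≠ ⊥ :=
      fun α => ⟨{α}, Finset.mem_singleton_self α, Finset.card_singleton α, hMne α⟩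
    set P : ι → ℕ → Prop :=
      fun α k => ∃ u : Finset ι, α ∈ u ∧ u.card = k ∧ D u ⊓ e (w (M α)) ≠ ⊥ with hP
    set kk : ι → ℕ := fun α => Nat.findGreatest (P α) (M α) with hkk
    have hkspec : ∀ α, ∃ u : Finset ι, α ∈ u ∧ u.card = kk α ∧ D u ⊓ e (w (M α)) ≠ ⊥ :=
      fun α => Nat.findGreatest_spec (P := P α) (hMpos α) (hP1 α)
    choose uu huu1 huu2 huu3 using hkspec
    have hmax : ∀ (α : ι) (v : Finset ι), uu α ⊂ v → D v ⊓ e (w (M α)) = ⊥ := by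
      intro α v hsub
      by_contra hne
      have hcard : v.card ≤ M α := by
        by_contra hh
        push_neg at hh
        exact hne (hbound _ _ hh)
      have hPv : P α v.card := ⟨v, hsub.subset (huu1 α), rfl, hne⟩
      have hlt : kk α < v.card := by rw [← huu2 α]; exact Finset.card_lt_card hsub
      exact Nat.findGreatest_is_greatest hlt hcard hPv
    set G : ι → B' := fun α => D (uu α) ⊓ e (w (M α)) with hG
    have hGne : ∀ α, G α ≠ ⊥ := huu3
    have hGdisj : ∀ α β : ι, (M α, uu α) ≠ (M β, uu β) → G α ⊓ G β = ⊥ := by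
      intro α β hne
      by_cases hMeq : M α = M β
      · have hune : uu α ≠ uu β := fun h => hne (by rw [hMeq, h])
        have hDun : D (uu α) ⊓ D (uu β) ≤ D (uu α ∪ uu β) := by
          rw [hDmult (uu α), hDmult (uu β), hDmult (uu α ∪ uu β), Finset.inf_union]
        have hle2 : G α ⊓ G β ≤ D (uu α ∪ uu β) ⊓ e (w (M α)) := by
          refine le_inf ?_ ?_
          · exact le_trans (inf_le_inf inf_le_left inf_le_left) hDun
          · exact le_trans inf_le_left inf_le_right
        have hsub : uu α ⊂ uu α ∪ uu β ∨ uu β ⊂ uu α ∪ uu β := by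
          by_contra hcon
          push_neg at hcon
          have e1 : uu α = uu α ∪ uu β :=
            Finset.Subset.antisymm Finset.subset_union_left
              (by by_contra hx; exact hcon.1 ⟨Finset.subset_union_left, fun hsub2 => hx hsub2⟩)
          have e2 : uu β = uu α ∪ uu β :=
            Finset.Subset.antisymm Finset.subset_union_right
              (by by_contra hx; exact hcon.2 ⟨Finset.subset_union_right, fun hsub2 => hx hsub2⟩)
          exact hune (e1.trans e2.symm)
        rcases hsub with h | h
        · rw [hmax α _ h] at hle2; exact le_bot_iff.mp hle2
        · rw [hMeq, hmax β _ h] at hle2; exact le_bot_iff.mp hle2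
      · have h1 : G α ⊓ G β ≤ e (w (M α)) ⊓ e (w (M β)) := inf_le_inf inf_le_right inf_le_right
        rw [← heInf, hwdisj _ _ hMeq, hebot] at h1
        exact le_bot_iff.mp h1
    have hGeq : ∀ α β : ι, G α = G β → M α = M β ∧ uu α = uu β := by
      intro α β h
      by_contra hcon
      have hne : (M α, uu α) ≠ (M β, uu β) := by
        intro hp
        exact hcon ⟨congrArg Prod.fst hp, congrArg Prod.snd hp⟩
      have := hGdisj α β hne
      rw [h, inf_idem] at this
      exact hGne β this
    set R : Set B' := Set.range G with hR
    have hanti : IsAntichainIn R := by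
      constructor
      · rintro x ⟨α, rfl⟩; exact hGne α
      · rintro x ⟨α, rfl⟩ y ⟨β, rfl⟩ hxy
        refine hGdisj α β fun hp => hxy ?_
        have h1 : M α = M β := congrArg Prod.fst hp
        have h2 : uu α = uu β := congrArg Prod.snd hp
        rw [hG]; simp only [h1, h2]
    have hemb : Function.Injective
        (fun α : ι => ((⟨G α, α, rfl⟩ : R), (uu α).toList.idxOf α)) := by
      intro α β hfe
      have hGe : G α = G β := congrArg (fun p => (p.1 : B')) hfe
      obtain ⟨hMe, hue⟩ := hGeq α β hGe
      have hidx : (uu α).toList.idxOf α = (uu β).toList.idxOf β :=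
        congrArg Prod.snd hfe
      rw [← hue] at hidx
      have hma : α ∈ (uu α).toList := Finset.mem_toList.mpr (huu1 α)
      have hmb : β ∈ (uu α).toList := by rw [hue]; exact Finset.mem_toList.mpr (huu1 β)
      exact (List.idxOf_inj hma).mp hidx
    have hle3 : Cardinal.lift.{v} (Cardinal.mk ι) ≤ Cardinal.lift.{u} (Cardinal.mk (R × ℕ)) :=
      Cardinal.lift_mk_le'.mpr ⟨⟨_, hemb⟩⟩
    have hmkprod : Cardinal.mk (R × ℕ) = Cardinal.mk R * Cardinal.aleph0 := by
      rw [Cardinal.mk_prod, Cardinal.mk_nat, Cardinal.lift_aleph0, Cardinal.lift_uzero]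
    have hccR : Cardinal.lift.{u} (Cardinal.mk R) < Cardinal.lift.{v} lam := hcc R hanti
    have halephlift : Cardinal.aleph0 < Cardinal.lift.{v} lam := by
      have := (Cardinal.lift_lt (a := (Cardinal.aleph0 : Cardinal.{u})) (b := lam)).mpr haleph
      rwa [Cardinal.lift_aleph0] at this
    have hfinal : Cardinal.lift.{u} (Cardinal.mk (R × ℕ)) < Cardinal.lift.{v} lam := by
      rw [hmkprod, Cardinal.lift_mul, Cardinal.lift_aleph0]
      rcases le_total (Cardinal.lift.{u} (Cardinal.mk R)) Cardinal.aleph0 with hle4 | hle4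
      · calc Cardinal.lift.{u} (Cardinal.mk R) * Cardinal.aleph0 ≤ Cardinal.aleph0 * Cardinal.aleph0 :=
              mul_le_mul' hle4 le_rfl
          _ = Cardinal.aleph0 := Cardinal.aleph0_mul_aleph0
          _ < _ := halephlift
      · rw [Cardinal.mul_eq_left hle4 hle4 Cardinal.aleph0_ne_zero]
        exact hccR
    rw [hι] at hle3
    exact absurd (hle3.trans_lt hfinal) (lt_irrefl _)

end BA
end
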